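/- Let 0 < q < 1, 0 < p < 1, 0 ≤ ε₀, ε₁ with q(1−ε₀)+(1−q)ε₁ = p, and let N be such that qN, ε₀qN, (1−q)N, ε₁(1−q)N, pN are positive integers. Then the covering probability p_c = C(qN, ε₀qN)·C((1−q)N, ε₁(1−q)N) / C(N, pN) satisfies p_c ≥ N^{−1/2}·2^{−K₂}·2^{−i(ε₀,ε₁)N}, where i(ε₀,ε₁) = H₂(p) − q·H₂(ε₀) − (1−q)·H₂(ε₁) (in bits) and K₂ = log₂(√(2π)·e^{5/12}) − (1/2)·log₂(p(1−p)). -/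

import Mathlib

/-- Binary entropy function (in bits). -/
noncomputable def H2 (x : ℝ) : ℝ :=
  -(x * Real.logb 2 x) - ((1 - x) * Real.logb 2 (1 - x))

open Real Filter

lemma sqrtpi_le_stirlingSeq (n : ℕ) (hn : 1 ≤ n) : Real.sqrt π ≤ Stirling.stirlingSeq n := by
  obtain ⟨m, rfl⟩ := Nat.exists_eq_add_of_le hn
  have h1 : Tendsto (Stirling.stirlingSeq ∘ Nat.succ) atTop (nhds (Real.sqrt π)) :=
    Stirling.tendsto_stirlingSeq_sqrt_pi.comp (tendsto_add_atTop_nat 1)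
  have := Stirling.stirlingSeq'_antitone.le_of_tendsto h1 m
  simpa [Nat.succ_eq_add_one, Nat.add_comm] using this

lemma tele (n : ℕ) : ∀ j : ℕ, Real.log (Stirling.stirlingSeq (n+2)) - Real.log (Stirling.stirlingSeq (n+2+j)) ≤ (1/4) * (1/((n:ℝ)+1) - 1/((n:ℝ)+1+j)) := by
  intro j
  induction j with
  | zero => simp
  | succ j ih =>
    have h2 := Stirling.log_stirlingSeq_sub_log_stirlingSeq_succ (n+1+j+1)
    have hstep : (1:ℝ) / (4 * (↑(n+1+j+1):ℝ)^2) ≤ (1/4) * (1/((n:ℝ)+1+j) - 1/((n:ℝ)+1+(j+1))) := by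
      have hx : ((n:ℝ)+1+j) ≠ 0 := by positivity
      have hy : ((n:ℝ)+2+j) ≠ 0 := by positivity
      have heq : (1/4:ℝ)*(1/((n:ℝ)+1+j) - 1/((n:ℝ)+1+(j+1))) = 1/(4*(((n:ℝ)+1+j)*((n:ℝ)+2+j))) := by
        field_simp
        ring_nf
      rw [heq]
      apply one_div_le_one_div_of_le (by positivity)
      push_cast
      nlinarith [Nat.cast_nonneg (α := ℝ) n, Nat.cast_nonneg (α := ℝ) j]
    have heq : n+2+(j+1) = (n+1+j)+2 := by ring
    calc Real.log (Stirling.stirlingSeq (n+2)) - Real.log (Stirling.stirlingSeq (n+2+(j+1)))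
        = (Real.log (Stirling.stirlingSeq (n+2)) - Real.log (Stirling.stirlingSeq (n+2+j)))
          + (Real.log (Stirling.stirlingSeq ((n+1+j)+1)) - Real.log (Stirling.stirlingSeq ((n+1+j)+2))) := by
          rw [heq]; ring_nf
      _ ≤ (1/4) * (1/((n:ℝ)+1) - 1/((n:ℝ)+1+j)) + 1 / (4 * (↑(n+1+j+1):ℝ)^2) := by
          exact add_le_add ih h2
      _ ≤ (1/4) * (1/((n:ℝ)+1) - 1/((n:ℝ)+1+↑(j+1))) := by
          push_cast at hstep ⊢
          linarith

lemma log_s_upper (n : ℕ) :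
    Real.log (Stirling.stirlingSeq (n+2)) ≤ Real.log (Real.sqrt π) + (1/4) * (1/((n:ℝ)+1)) := by
  have h0 : Tendsto (fun j : ℕ => Stirling.stirlingSeq (n+2+j)) atTop (nhds (Real.sqrt π)) := by
    simpa [Function.comp_def, Nat.add_comm] using
      Stirling.tendsto_stirlingSeq_sqrt_pi.comp (tendsto_add_atTop_nat (n+2))
  have hlim : Tendsto (fun j : ℕ => Real.log (Stirling.stirlingSeq (n+2)) - Real.log (Stirling.stirlingSeq (n+2+j)))
      atTop (nhds (Real.log (Stirling.stirlingSeq (n+2)) - Real.log (Real.sqrt π))) :=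
    Tendsto.const_sub _ ((Real.continuousAt_log (by positivity)).tendsto.comp h0)
  have h3 : Tendsto (fun j : ℕ => ((n:ℝ)+1+j)) atTop atTop :=
    tendsto_atTop_add_const_left _ _ tendsto_natCast_atTop_atTop
  have hlim2 : Tendsto (fun j : ℕ => (1/4:ℝ) * (1/((n:ℝ)+1) - 1/((n:ℝ)+1+j))) atTop
      (nhds ((1/4) * (1/((n:ℝ)+1) - 0))) := by
    apply Tendsto.const_mul
    apply Tendsto.const_sub
    simpa [one_div, Pi.inv_def] using h3.inv_tendsto_atTop
  have := le_of_tendsto_of_tendsto' hlim hlim2 (tele n)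
  linarith

lemma s_upper (n : ℕ) (hn : 1 ≤ n) :
    Stirling.stirlingSeq n ≤ Real.sqrt π * Real.exp (1/4) := by
  match n, hn with
  | 1, _ =>
    rw [Stirling.stirlingSeq_one]
    rw [div_le_iff₀ (by positivity)]
    have h6 : Real.sqrt 6 ≤ Real.sqrt π * Real.sqrt 2 := by
      rw [← Real.sqrt_mul pi_pos.le]
      apply Real.sqrt_le_sqrt
      nlinarith [pi_gt_three]
    have h24 : (2.4:ℝ) ≤ Real.sqrt 6 := by
      rw [show (2.4:ℝ) = Real.sqrt (2.4^2) by rw [Real.sqrt_sq]; norm_num]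
      apply Real.sqrt_le_sqrt; norm_num
    have hexp : (1.25:ℝ) ≤ Real.exp (1/4) := by
      nlinarith [Real.add_one_le_exp (1/4:ℝ)]
    have he : Real.exp 1 < 2.7182818286 := Real.exp_one_lt_d9
    nlinarith [Real.exp_pos (1/4:ℝ), Real.sqrt_nonneg (6:ℝ)]
  | (m+2), _ =>
    have h := log_s_upper m
    have h2 : Real.log (Stirling.stirlingSeq (m+2)) ≤ Real.log (Real.sqrt π) + 1/4 := by
      have : (1/4:ℝ) * (1/((m:ℝ)+1)) ≤ 1/4 := by
        rw [mul_le_iff_le_one_right (by norm_num)]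
        rw [div_le_one (by positivity)]
        simp [Nat.cast_nonneg]
      linarith
    have hpos := Stirling.stirlingSeq'_pos (m+1)
    calc Stirling.stirlingSeq (m+2) = Real.exp (Real.log (Stirling.stirlingSeq (m+2))) := by
          rw [Real.exp_log hpos]
      _ ≤ Real.exp (Real.log (Real.sqrt π) + 1/4) := Real.exp_le_exp.mpr h2
      _ = Real.sqrt π * Real.exp (1/4) := by
          rw [Real.exp_add, Real.exp_log (by positivity)]

lemma fact_eq (n : ℕ) (hn : 1 ≤ n) :
    (n.factorial : ℝ) = Stirling.stirlingSeq n * (Real.sqrt (2*(n:ℝ)) * ((n:ℝ)/Real.exp 1)^n) := by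
  have hn' : (0:ℝ) < n := by exact_mod_cast hn
  rw [Stirling.stirlingSeq, div_mul_cancel₀]
  positivity

lemma sqrt_split (n : ℕ) : Real.sqrt (2*π*(n:ℝ)) = Real.sqrt π * Real.sqrt (2*(n:ℝ)) := by
  rw [← Real.sqrt_mul pi_pos.le]
  ring_nf

lemma fact_lower (n : ℕ) (hn : 1 ≤ n) :
    Real.sqrt (2*π*(n:ℝ)) * ((n:ℝ)/Real.exp 1)^n ≤ (n.factorial : ℝ) := by
  have hn' : (0:ℝ) < n := by exact_mod_cast hn
  rw [fact_eq n hn, sqrt_split]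
  have := sqrtpi_le_stirlingSeq n hn
  have hpos : (0:ℝ) ≤ Real.sqrt (2*(n:ℝ)) * ((n:ℝ)/Real.exp 1)^n := by positivity
  nlinarith [Real.sqrt_nonneg (2*(n:ℝ)), pow_nonneg (div_nonneg hn'.le (Real.exp_pos 1).le) n]

lemma fact_upper (n : ℕ) (hn : 1 ≤ n) :
    (n.factorial : ℝ) ≤ Real.sqrt (2*π*(n:ℝ)) * ((n:ℝ)/Real.exp 1)^n * Real.exp (1/4) := by
  have hn' : (0:ℝ) < n := by exact_mod_cast hn
  rw [fact_eq n hn, sqrt_split]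
  have := s_upper n hn
  have hpos : (0:ℝ) ≤ Real.sqrt (2*(n:ℝ)) * ((n:ℝ)/Real.exp 1)^n := by positivity
  nlinarith [Real.sqrt_nonneg (2*(n:ℝ)), pow_nonneg (div_nonneg hn'.le (Real.exp_pos 1).le) n]

lemma choose_cast (j d : ℕ) :
    ((j+d).choose j : ℝ) = ((j+d).factorial : ℝ) / ((j.factorial : ℝ) * (d.factorial : ℝ)) := by
  rw [Nat.cast_choose ℝ (Nat.le_add_right j d)]
  simp

lemma choose_lower_mid (j d : ℕ) (hj : 1 ≤ j) (hd : 1 ≤ d) :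
    Real.sqrt (((j:ℝ)+d)/(2*π*j*d)) * (((j:ℝ)+d)^(j+d)/((j:ℝ)^j*(d:ℝ)^d)) * Real.exp (-(1/2))
      ≤ ((j+d).choose j : ℝ) := by
  have hj' : (0:ℝ) < j := by exact_mod_cast hj
  have hd' : (0:ℝ) < d := by exact_mod_cast hd
  have h1 := fact_lower (j+d) (by omega)
  have h2 := fact_upper j hj
  have h3 := fact_upper d hd
  have hDpos : (0:ℝ) < (Real.sqrt (2*π*(j:ℝ)) * ((j:ℝ)/Real.exp 1)^j * Real.exp (1/4)) *
      (Real.sqrt (2*π*(d:ℝ)) * ((d:ℝ)/Real.exp 1)^d * Real.exp (1/4)) := by positivity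
  have hfj : (0:ℝ) < j.factorial := by exact_mod_cast j.factorial_pos
  have hfd : (0:ℝ) < d.factorial := by exact_mod_cast d.factorial_pos
  rw [choose_cast]
  have key : Real.sqrt (((j:ℝ)+d)/(2*π*j*d)) * (((j:ℝ)+d)^(j+d)/((j:ℝ)^j*(d:ℝ)^d)) * Real.exp (-(1/2))
      = (Real.sqrt (2*π*((j:ℝ)+(d:ℝ))) * (((j:ℝ)+d)/Real.exp 1)^(j+d)) /
        ((Real.sqrt (2*π*(j:ℝ)) * ((j:ℝ)/Real.exp 1)^j * Real.exp (1/4)) *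
         (Real.sqrt (2*π*(d:ℝ)) * ((d:ℝ)/Real.exp 1)^d * Real.exp (1/4))) := by
    have hs : Real.sqrt (2*π*((j:ℝ)+(d:ℝ)))
        = Real.sqrt (((j:ℝ)+d)/(2*π*j*d)) * (Real.sqrt (2*π*(j:ℝ)) * Real.sqrt (2*π*(d:ℝ))) := by
      rw [← Real.sqrt_mul (by positivity), ← Real.sqrt_mul (by positivity)]
      congr 1
      field_simp
    rw [hs, eq_div_iff hDpos.ne']
    simp only [div_pow]
    rw [Real.exp_neg]
    have hE : Real.exp (1/4) * Real.exp (1/4) = Real.exp (1/2) := by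
      rw [← Real.exp_add]; norm_num
    have hEpow : (Real.exp 1)^j * (Real.exp 1)^d = (Real.exp 1)^(j+d) := by
      rw [pow_add]
    field_simp
    ring_nf
    have hE2 : Real.exp (1/4) ^ 2 * Real.exp ((j:ℝ)+(d:ℝ)) = Real.exp (1/2) * Real.exp (j:ℝ) * Real.exp (d:ℝ) := by
      rw [sq, ← Real.exp_add, ← Real.exp_add, ← Real.exp_add, ← Real.exp_add]
      norm_num
      ring
    linear_combination (Real.exp 1 ^ j * Real.exp 1 ^ d) * hE
  rw [key]
  apply div_le_div₀ (by positivity) ?_ (by positivity) (mul_le_mul h2 h3 hfd.le (by positivity))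
  push_cast at h1 ⊢
  convert h1 using 3 <;> push_cast <;> ring

lemma choose_upper_mid (j d : ℕ) (hj : 1 ≤ j) (hd : 1 ≤ d) :
    ((j+d).choose j : ℝ)
      ≤ Real.sqrt (((j:ℝ)+d)/(2*π*j*d)) * (((j:ℝ)+d)^(j+d)/((j:ℝ)^j*(d:ℝ)^d)) * Real.exp (1/4) := by
  have hj' : (0:ℝ) < j := by exact_mod_cast hj
  have hd' : (0:ℝ) < d := by exact_mod_cast hd
  have h1 := fact_upper (j+d) (by omega)
  have h2 := fact_lower j hj
  have h3 := fact_lower d hd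
  have hDpos : (0:ℝ) < (Real.sqrt (2*π*(j:ℝ)) * ((j:ℝ)/Real.exp 1)^j) *
      (Real.sqrt (2*π*(d:ℝ)) * ((d:ℝ)/Real.exp 1)^d) := by positivity
  have hfj : (0:ℝ) < j.factorial := by exact_mod_cast j.factorial_pos
  have hfd : (0:ℝ) < d.factorial := by exact_mod_cast d.factorial_pos
  rw [choose_cast]
  have key : Real.sqrt (((j:ℝ)+d)/(2*π*j*d)) * (((j:ℝ)+d)^(j+d)/((j:ℝ)^j*(d:ℝ)^d)) * Real.exp (1/4)
      = (Real.sqrt (2*π*((j:ℝ)+(d:ℝ))) * (((j:ℝ)+d)/Real.exp 1)^(j+d) * Real.exp (1/4)) /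
        ((Real.sqrt (2*π*(j:ℝ)) * ((j:ℝ)/Real.exp 1)^j) *
         (Real.sqrt (2*π*(d:ℝ)) * ((d:ℝ)/Real.exp 1)^d)) := by
    have hs : Real.sqrt (2*π*((j:ℝ)+(d:ℝ)))
        = Real.sqrt (((j:ℝ)+d)/(2*π*j*d)) * (Real.sqrt (2*π*(j:ℝ)) * Real.sqrt (2*π*(d:ℝ))) := by
      rw [← Real.sqrt_mul (by positivity), ← Real.sqrt_mul (by positivity)]
      congr 1
      field_simp
    rw [hs, eq_div_iff hDpos.ne']
    simp only [div_pow]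
    have hE2 : Real.exp ((j:ℝ)+(d:ℝ)) = Real.exp (j:ℝ) * Real.exp (d:ℝ) := by
      rw [← Real.exp_add]
    field_simp
    ring_nf
  rw [key]
  apply div_le_div₀ (by positivity) ?_ (by positivity) (mul_le_mul h2 h3 (by positivity) (by positivity))
  calc ((j+d).factorial : ℝ) ≤ Real.sqrt (2*π*((j+d:ℕ):ℝ)) * (((j+d:ℕ):ℝ)/Real.exp 1)^(j+d) * Real.exp (1/4) :=
        fact_upper (j+d) (by omega)
    _ = Real.sqrt (2*π*((j:ℝ)+(d:ℝ))) * (((j:ℝ)+d)/Real.exp 1)^(j+d) * Real.exp (1/4) := by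
        push_cast; ring_nf

lemma choose_lower_all (j d : ℕ) (h : 1 ≤ j + d) :
    Real.sqrt (2/(π*((j:ℝ)+d))) * Real.exp (-(1/2)) * (((j:ℝ)+d)^(j+d)/((j:ℝ)^j*(d:ℝ)^d))
      ≤ ((j+d).choose j : ℝ) := by
  rcases Nat.eq_zero_or_pos j with hj | hj
  · subst hj
    have hd' : (0:ℝ) < d := by exact_mod_cast (by omega : 1 ≤ d)
    simp only [Nat.zero_add, Nat.choose_zero_right, Nat.cast_one, Nat.cast_zero, pow_zero, one_mul,
      zero_add]
    have hW : ((d:ℝ))^d/((d:ℝ))^d = 1 := by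
      rw [div_self (by positivity)]
    rw [hW, mul_one]
    have h1 : Real.sqrt (2/(π*(d:ℝ))) ≤ 1 := by
      rw [show (1:ℝ) = Real.sqrt 1 by simp]
      apply Real.sqrt_le_sqrt
      rw [div_le_one (by positivity)]
      have hd1 : (1:ℝ) ≤ d := by exact_mod_cast (by omega : 1 ≤ d)
      nlinarith [pi_gt_three]
    have h2 : Real.exp (-(1/2)) ≤ 1 := by
      rw [Real.exp_le_one_iff]; norm_num
    nlinarith [Real.sqrt_nonneg (2/(π*(d:ℝ))), Real.exp_pos (-(1/2):ℝ)]
  · rcases Nat.eq_zero_or_pos d with hd | hd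
    · subst hd
      have hj' : (0:ℝ) < j := by exact_mod_cast hj
      simp only [Nat.add_zero, Nat.choose_self, Nat.cast_one, Nat.cast_zero, pow_zero, mul_one,
        add_zero]
      have hW : ((j:ℝ))^j/((j:ℝ))^j = 1 := by
        rw [div_self (by positivity)]
      rw [hW, mul_one]
      have h1 : Real.sqrt (2/(π*(j:ℝ))) ≤ 1 := by
        rw [show (1:ℝ) = Real.sqrt 1 by simp]
        apply Real.sqrt_le_sqrt
        rw [div_le_one (by positivity)]
        have hj1 : (1:ℝ) ≤ j := by exact_mod_cast hj
        nlinarith [pi_gt_three]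
      have h2 : Real.exp (-(1/2)) ≤ 1 := by
        rw [Real.exp_le_one_iff]; norm_num
      nlinarith [Real.sqrt_nonneg (2/(π*(j:ℝ))), Real.exp_pos (-(1/2):ℝ)]
    · have hj' : (0:ℝ) < j := by exact_mod_cast hj
      have hd' : (0:ℝ) < d := by exact_mod_cast hd
      have hmid := choose_lower_mid j d hj hd
      refine le_trans ?_ hmid
      have hW : (0:ℝ) ≤ (((j:ℝ)+d)^(j+d)/((j:ℝ)^j*(d:ℝ)^d)) := by positivity
      have hsq : Real.sqrt (2/(π*((j:ℝ)+d))) ≤ Real.sqrt (((j:ℝ)+d)/(2*π*j*d)) := by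
        apply Real.sqrt_le_sqrt
        rw [div_le_div_iff₀ (by positivity) (by positivity)]
        nlinarith [mul_nonneg pi_pos.le (sq_nonneg ((j:ℝ)-(d:ℝ)))]
      have hstep := mul_le_mul_of_nonneg_right hsq
        (show (0:ℝ) ≤ Real.exp (-(1/2)) * (((j:ℝ)+d)^(j+d)/((j:ℝ)^j*(d:ℝ)^d)) by positivity)
      refine le_trans (le_of_eq (by ring)) (le_trans hstep (le_of_eq (by ring)))


lemma H2_zero : H2 0 = 0 := by simp [H2]
lemma H2_one : H2 1 = 0 := by simp [H2]

lemma W_eq (j d : ℕ) (h : 1 ≤ j + d) :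
    (((j:ℝ)+d)^(j+d)/((j:ℝ)^j*(d:ℝ)^d)) = (2:ℝ) ^ (((j:ℝ)+d) * H2 ((j:ℝ)/((j:ℝ)+d))) := by
  have hn : (0:ℝ) < (j:ℝ)+d := by
    have : (0:ℕ) < j + d := h
    exact_mod_cast this
  rcases Nat.eq_zero_or_pos j with hj | hj
  · subst hj
    have hd' : (0:ℝ) < d := by exact_mod_cast (by omega : 0 < d)
    simp only [Nat.cast_zero, zero_add, pow_zero, one_mul, Nat.zero_add, zero_div]
    rw [H2_zero, mul_zero, Real.rpow_zero, div_self (by positivity)]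
  rcases Nat.eq_zero_or_pos d with hd | hd
  · subst hd
    have hj' : (0:ℝ) < j := by exact_mod_cast hj
    simp only [Nat.cast_zero, add_zero, pow_zero, mul_one, Nat.add_zero]
    rw [div_self hj'.ne', H2_one, mul_zero, Real.rpow_zero, div_self (by positivity)]
  have hj' : (0:ℝ) < j := by exact_mod_cast hj
  have hd' : (0:ℝ) < d := by exact_mod_cast hd
  have ht : (1:ℝ) - (j:ℝ)/((j:ℝ)+d) = (d:ℝ)/((j:ℝ)+d) := by
    field_simp
    ring
  have hexp : ((j:ℝ)+d) * H2 ((j:ℝ)/((j:ℝ)+d))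
      = Real.logb 2 ((j:ℝ)/((j:ℝ)+d)) * (-(j:ℝ)) + Real.logb 2 ((d:ℝ)/((j:ℝ)+d)) * (-(d:ℝ)) := by
    rw [H2, ht]
    field_simp
    ring
  rw [hexp, Real.rpow_add two_pos]
  rw [Real.rpow_mul two_pos.le, Real.rpow_mul two_pos.le]
  rw [Real.rpow_logb two_pos (by norm_num) (by positivity),
      Real.rpow_logb two_pos (by norm_num) (by positivity)]
  rw [Real.rpow_neg (by positivity), Real.rpow_neg (by positivity),
      Real.rpow_natCast, Real.rpow_natCast]
  rw [div_pow, div_pow]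
  rw [pow_add ((j:ℝ)+d) j d]
  field_simp

lemma exp53 : Real.exp (5/3) ≤ 16 := by
  have h1 : Real.exp (5/3:ℝ) ≤ Real.exp 2 := Real.exp_le_exp.mpr (by norm_num)
  have h2 : Real.exp 2 = Real.exp 1 * Real.exp 1 := by
    rw [← Real.exp_add]; norm_num
  have := Real.exp_one_lt_d9
  nlinarith [Real.exp_pos (1:ℝ)]

set_option maxHeartbeats 2000000 in
lemma final_numeric (kR mR NR rR dR : ℝ) (hk : 1 ≤ kR) (hm : 1 ≤ mR) (hr : 1 ≤ rR) (hd : 1 ≤ dR)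
    (hkm : kR + mR = NR) (hrd : rR + dR = NR) :
    (1/Real.sqrt NR) * (Real.sqrt ((rR/NR)*(dR/NR)) / (Real.sqrt (2*π) * Real.exp (5/12)))
      ≤ (Real.sqrt (2/(π*kR)) * Real.exp (-(1/2)) * (Real.sqrt (2/(π*mR)) * Real.exp (-(1/2))))
        / (Real.sqrt (NR/(2*π*rR*dR)) * Real.exp (1/4)) := by
  have hk0 : (0:ℝ) < kR := by linarith
  have hm0 : (0:ℝ) < mR := by linarith
  have hr0 : (0:ℝ) < rR := by linarith
  have hd0 : (0:ℝ) < dR := by linarith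
  have hN0 : (0:ℝ) < NR := by linarith
  set T := (1/Real.sqrt NR) * (Real.sqrt ((rR/NR)*(dR/NR)) / (Real.sqrt (2*π) * Real.exp (5/12))) with hT
  set Q := (Real.sqrt (2/(π*kR)) * Real.exp (-(1/2)) * (Real.sqrt (2/(π*mR)) * Real.exp (-(1/2))))
        / (Real.sqrt (NR/(2*π*rR*dR)) * Real.exp (1/4)) with hQ
  have hTpos : 0 ≤ T := by rw [hT]; positivity
  have hQpos : 0 ≤ Q := by rw [hQ]; positivity
  have h1 : (1/Real.sqrt NR)^2 = 1/NR := by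
    rw [div_pow, one_pow, Real.sq_sqrt hN0.le]
  have h2 : (Real.sqrt ((rR/NR)*(dR/NR)))^2 = (rR/NR)*(dR/NR) := Real.sq_sqrt (by positivity)
  have h3 : (Real.sqrt (2*π) * Real.exp (5/12))^2 = (2*π) * Real.exp (5/6) := by
    rw [mul_pow, Real.sq_sqrt (by positivity), sq, ← Real.exp_add]; norm_num
  have h4 : (Real.sqrt (2/(π*kR)) * Real.exp (-(1/2)))^2 = (2/(π*kR)) * Real.exp (-1) := by
    rw [mul_pow, Real.sq_sqrt (by positivity), sq, ← Real.exp_add]; norm_num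
  have h5 : (Real.sqrt (2/(π*mR)) * Real.exp (-(1/2)))^2 = (2/(π*mR)) * Real.exp (-1) := by
    rw [mul_pow, Real.sq_sqrt (by positivity), sq, ← Real.exp_add]; norm_num
  have h6 : (Real.sqrt (NR/(2*π*rR*dR)) * Real.exp (1/4))^2 = (NR/(2*π*rR*dR)) * Real.exp (1/2) := by
    rw [mul_pow, Real.sq_sqrt (by positivity), sq, ← Real.exp_add]; norm_num
  have hEneg : Real.exp (-1) * Real.exp (-1) = (Real.exp 2)⁻¹ := by
    rw [← Real.exp_add, ← Real.exp_neg]; norm_num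
  have hT2 : T^2 = (rR*dR) / (NR^3 * (2*π) * Real.exp (5/6)) := by
    calc T^2 = (1/Real.sqrt NR)^2 * ((Real.sqrt ((rR/NR)*(dR/NR)))^2/((Real.sqrt (2*π) * Real.exp (5/12))^2)) := by
          rw [hT]; ring
      _ = 1/NR * (((rR/NR)*(dR/NR))/((2*π) * Real.exp (5/6))) := by rw [h1, h2, h3]
      _ = (rR*dR) / (NR^3 * (2*π) * Real.exp (5/6)) := by field_simp
  have hQ2 : Q^2 = (8*rR*dR) / (π*kR*mR*NR*(Real.exp (1/2) * Real.exp 2)) := by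
    calc Q^2 = ((Real.sqrt (2/(π*kR)) * Real.exp (-(1/2)))^2 * (Real.sqrt (2/(π*mR)) * Real.exp (-(1/2)))^2)
          / ((Real.sqrt (NR/(2*π*rR*dR)) * Real.exp (1/4))^2) := by rw [hQ]; ring
      _ = ((2/(π*kR)) * Real.exp (-1) * ((2/(π*mR)) * Real.exp (-1))) / ((NR/(2*π*rR*dR)) * Real.exp (1/2)) := by
          rw [h4, h5, h6]
      _ = (8*rR*dR) / (π*kR*mR*NR*(Real.exp (1/2) * Real.exp 2)) := by
          rw [mul_mul_mul_comm, hEneg]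
          rw [div_eq_div_iff (by positivity) (by positivity)]
          field_simp
          ring
  have hsq : T^2 ≤ Q^2 := by
    rw [hT2, hQ2, div_le_div_iff₀ (by positivity) (by positivity)]
    have hA : kR * mR ≤ NR^2 := by nlinarith
    have hE : Real.exp (1/2) * Real.exp 2 = Real.exp (5/6) * Real.exp (5/3) := by
      rw [← Real.exp_add, ← Real.exp_add]; norm_num
    have hkmE : kR * mR * Real.exp (5/3) ≤ NR^2 * 16 :=
      mul_le_mul hA exp53 (Real.exp_pos _).le (by positivity)
    rw [hE]
    nlinarith [mul_le_mul_of_nonneg_left hkmE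
      (show (0:ℝ) ≤ π * rR * dR * NR * Real.exp (5/6) by positivity)]
  calc T = Real.sqrt (T^2) := (Real.sqrt_sq hTpos).symm
    _ ≤ Real.sqrt (Q^2) := Real.sqrt_le_sqrt hsq
    _ = Q := Real.sqrt_sq hQpos


lemma chooseL (j d : ℕ) (h : 1 ≤ j + d) :
    Real.sqrt (2/(π*((j:ℝ)+d))) * Real.exp (-(1/2)) * (2:ℝ)^(((j:ℝ)+d) * H2 ((j:ℝ)/((j:ℝ)+d)))
      ≤ ((j+d).choose j : ℝ) := by
  rw [← W_eq j d h]; exact choose_lower_all j d h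

lemma chooseU (j d : ℕ) (hj : 1 ≤ j) (hd : 1 ≤ d) :
    ((j+d).choose j : ℝ)
      ≤ Real.sqrt (((j:ℝ)+d)/(2*π*j*d)) * (2:ℝ)^(((j:ℝ)+d) * H2 ((j:ℝ)/((j:ℝ)+d))) * Real.exp (1/4) := by
  rw [← W_eq j d (by omega)]; exact choose_upper_mid j d hj hd

set_option maxHeartbeats 1000000 in
/-- lower bound on the covering probability
`p_c = C(qN, ε₀qN) C((1−q)N, ε₁(1−q)N) / C(N, pN)
     ≥ N^{−1/2} 2^{−K₂} 2^{−i(ε₀,ε₁)N}`,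
where `i(ε₀,ε₁) = H₂(p) − q H₂(ε₀) − (1−q) H₂(ε₁)` and
`K₂ = log₂(√(2π) e^{5/12}) − (1/2) log₂(p(1−p))`. -/
theorem stmt_8 (N k m a b r : ℕ) (q p e0 e1 : ℝ)
    (hq : 0 < q) (hq1 : q < 1) (hp : 0 < p) (hp1 : p < 1)
    (he0 : 0 ≤ e0) (he0' : e0 ≤ 1) (he1 : 0 ≤ e1) (he1' : e1 ≤ 1)
    (hcons : q * (1 - e0) + (1 - q) * e1 = p) (hN : 0 < N)
    (hk : (k : ℝ) = q * N) (ha : (a : ℝ) = e0 * q * N)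
    (hm : (m : ℝ) = (1 - q) * N) (hb : (b : ℝ) = e1 * (1 - q) * N)
    (hr : (r : ℝ) = p * N) :
    ((k.choose a * m.choose b : ℝ) / (N.choose r : ℝ)) ≥
      (N : ℝ) ^ (-(1/2) : ℝ) *
      (2 : ℝ) ^ (-(Real.logb 2 (Real.sqrt (2 * Real.pi) * Real.exp (5/12))
          - (1/2) * Real.logb 2 (p * (1 - p)))) *
      (2 : ℝ) ^ (-(H2 p - q * H2 e0 - (1 - q) * H2 e1) * N) := by
  have hN' : (0:ℝ) < N := by exact_mod_cast hN
  have hk0 : (0:ℝ) < k := by rw [hk]; positivity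
  have hm0 : (0:ℝ) < m := by rw [hm]; nlinarith
  have hr0 : (0:ℝ) < r := by rw [hr]; positivity
  have k1 : 0 < k := by exact_mod_cast hk0
  have m1 : 0 < m := by exact_mod_cast hm0
  have r1 : 0 < r := by exact_mod_cast hr0
  have hrltN : r < N := by
    have : (r:ℝ) < N := by rw [hr]; nlinarith
    exact_mod_cast this
  have hak : a ≤ k := by
    have : (a:ℝ) ≤ k := by rw [ha, hk]; nlinarith
    exact_mod_cast this
  have hbm : b ≤ m := by
    have : (b:ℝ) ≤ m := by rw [hb, hm]; nlinarith
    exact_mod_cast this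
  have hkmN : k + m = N := by
    have : ((k + m : ℕ):ℝ) = (N:ℝ) := by push_cast; rw [hk, hm]; ring
    exact_mod_cast this
  set d1 := k - a with hd1
  set d2 := m - b with hd2
  set d3 := N - r with hd3
  have ha1 : a + d1 = k := by omega
  have hb2 : b + d2 = m := by omega
  have hr3 : r + d3 = N := by omega
  have hcast1 : (a:ℝ) + (d1:ℝ) = (k:ℝ) := by exact_mod_cast congrArg (fun x : ℕ => (x:ℝ)) ha1
  have hcast2 : (b:ℝ) + (d2:ℝ) = (m:ℝ) := by exact_mod_cast congrArg (fun x : ℕ => (x:ℝ)) hb2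
  have hcast3 : (r:ℝ) + (d3:ℝ) = (N:ℝ) := by exact_mod_cast congrArg (fun x : ℕ => (x:ℝ)) hr3
  have he0k : (a:ℝ)/(k:ℝ) = e0 := by
    rw [div_eq_iff hk0.ne', ha, hk]; ring
  have he1m : (b:ℝ)/(m:ℝ) = e1 := by
    rw [div_eq_iff hm0.ne', hb, hm]; ring
  have hpN : (r:ℝ)/(N:ℝ) = p := by
    rw [div_eq_iff hN'.ne', hr]
  -- choose bounds
  have hC1 : Real.sqrt (2/(π*(k:ℝ))) * Real.exp (-(1/2)) * (2:ℝ)^((k:ℝ) * H2 e0)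
      ≤ (k.choose a : ℝ) := by
    have h := chooseL a d1 (by omega)
    rw [hcast1, he0k, ha1] at h
    exact h
  have hC2 : Real.sqrt (2/(π*(m:ℝ))) * Real.exp (-(1/2)) * (2:ℝ)^((m:ℝ) * H2 e1)
      ≤ (m.choose b : ℝ) := by
    have h := chooseL b d2 (by omega)
    rw [hcast2, he1m, hb2] at h
    exact h
  have hC3 : (N.choose r : ℝ)
      ≤ Real.sqrt ((N:ℝ)/(2*π*(r:ℝ)*(d3:ℝ))) * (2:ℝ)^((N:ℝ) * H2 p) * Real.exp (1/4) := by
    have h := chooseU r d3 r1 (by omega)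
    rw [hcast3, hpN, hr3] at h
    exact h
  have hchoosepos : (0:ℝ) < (N.choose r : ℝ) := by
    exact_mod_cast Nat.choose_pos (le_of_lt hrltN)
  have hU3pos : (0:ℝ) < Real.sqrt ((N:ℝ)/(2*π*(r:ℝ)*(d3:ℝ))) * (2:ℝ)^((N:ℝ) * H2 p) * Real.exp (1/4) := by
    have hd30 : (0:ℝ) < (d3:ℝ) := by
      have : 0 < d3 := by omega
      exact_mod_cast this
    have : (0:ℝ) < Real.sqrt ((N:ℝ)/(2*π*(r:ℝ)*(d3:ℝ))) := Real.sqrt_pos.mpr (by positivity)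
    positivity
  -- step 1
  have step1 : (Real.sqrt (2/(π*(k:ℝ))) * Real.exp (-(1/2)) * (2:ℝ)^((k:ℝ) * H2 e0))
        * (Real.sqrt (2/(π*(m:ℝ))) * Real.exp (-(1/2)) * (2:ℝ)^((m:ℝ) * H2 e1))
        / (Real.sqrt ((N:ℝ)/(2*π*(r:ℝ)*(d3:ℝ))) * (2:ℝ)^((N:ℝ) * H2 p) * Real.exp (1/4))
      ≤ (k.choose a : ℝ) * (m.choose b : ℝ) / (N.choose r : ℝ) := by
    apply div_le_div₀ (by positivity)
      (mul_le_mul hC1 hC2 (by positivity) (by positivity)) hchoosepos hC3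
  rw [ge_iff_le]
  push_cast
  refine le_trans ?_ step1
  -- rewrite RHS pieces
  have hd30 : (0:ℝ) < (d3:ℝ) := by
    have : 0 < d3 := by omega
    exact_mod_cast this
  have hNpow : (N:ℝ)^(-(1/2):ℝ) = 1/Real.sqrt (N:ℝ) := by
    rw [Real.rpow_neg hN'.le, ← Real.sqrt_eq_rpow, one_div]
  have hpp : p * (1-p) = ((r:ℝ)/(N:ℝ)) * ((d3:ℝ)/(N:ℝ)) := by
    rw [hpN]
    congr 1
    rw [eq_div_iff hN'.ne']
    rw [← hpN]
    field_simp
    linarith [hcast3]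
  have hK : (2:ℝ)^(-(Real.logb 2 (Real.sqrt (2*π) * Real.exp (5/12))
      - (1/2) * Real.logb 2 (p * (1-p))))
      = Real.sqrt (((r:ℝ)/(N:ℝ)) * ((d3:ℝ)/(N:ℝ))) / (Real.sqrt (2*π) * Real.exp (5/12)) := by
    rw [neg_sub, Real.rpow_sub two_pos]
    rw [Real.rpow_logb two_pos (by norm_num) (by positivity)]
    congr 1
    rw [mul_comm (1/2:ℝ), Real.rpow_mul two_pos.le]
    rw [Real.rpow_logb two_pos (by norm_num) (by rw [hpp]; positivity)]
    rw [hpp, ← Real.sqrt_eq_rpow]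
  have hX : (2:ℝ)^(-(H2 p - q * H2 e0 - (1 - q) * H2 e1) * N)
      = (2:ℝ)^((k:ℝ)*H2 e0) * (2:ℝ)^((m:ℝ)*H2 e1) / (2:ℝ)^((N:ℝ)*H2 p) := by
    rw [← Real.rpow_add two_pos, ← Real.rpow_sub two_pos]
    congr 1
    rw [hk, hm]; ring
  rw [hNpow, hK, hX]
  have hnum := final_numeric (k:ℝ) (m:ℝ) (N:ℝ) (r:ℝ) (d3:ℝ)
    (by exact_mod_cast k1) (by exact_mod_cast m1) (by exact_mod_cast r1)
    (by exact_mod_cast (show 1 ≤ d3 by omega))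
    (by exact_mod_cast congrArg (fun x : ℕ => (x:ℝ)) hkmN) hcast3
  calc 1/Real.sqrt (N:ℝ) * (Real.sqrt (((r:ℝ)/(N:ℝ)) * ((d3:ℝ)/(N:ℝ))) / (Real.sqrt (2*π) * Real.exp (5/12)))
        * ((2:ℝ)^((k:ℝ)*H2 e0) * (2:ℝ)^((m:ℝ)*H2 e1) / (2:ℝ)^((N:ℝ)*H2 p))
      ≤ ((Real.sqrt (2/(π*(k:ℝ))) * Real.exp (-(1/2)) * (Real.sqrt (2/(π*(m:ℝ))) * Real.exp (-(1/2))))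
          / (Real.sqrt ((N:ℝ)/(2*π*(r:ℝ)*(d3:ℝ))) * Real.exp (1/4)))
        * ((2:ℝ)^((k:ℝ)*H2 e0) * (2:ℝ)^((m:ℝ)*H2 e1) / (2:ℝ)^((N:ℝ)*H2 p)) := by
        apply mul_le_mul_of_nonneg_right hnum
        positivity
    _ = (Real.sqrt (2/(π*(k:ℝ))) * Real.exp (-(1/2)) * (2:ℝ)^((k:ℝ) * H2 e0))
        * (Real.sqrt (2/(π*(m:ℝ))) * Real.exp (-(1/2)) * (2:ℝ)^((m:ℝ) * H2 e1))
        / (Real.sqrt ((N:ℝ)/(2*π*(r:ℝ)*(d3:ℝ))) * (2:ℝ)^((N:ℝ) * H2 p) * Real.exp (1/4)) := by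
        ring
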